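/- Let i, j be drawn uniformly at random from all ordered pairs of distinct indices in {1,...,n}. Define Δ = E_{i≠j}[H_i ∇f_j(x*)], where H_i is the Hessian of f_i at the minimizer x* of F = (1/n)∑f_i. If each ‖H_i‖ ≤ L and ‖∇f_i(x*)‖ ≤ G, and ∇F(x*) = 0, then ‖Δ‖ ≤ LG/(n-1). -/

import Mathlib

open Finset

/-- If `Δ = E_{i≠j}[H_i ∇f_j(x*)]`, each `‖H_i‖ ≤ L`,
`‖∇f_i(x*)‖ ≤ G`, and `∑ ∇f_i(x*) = 0`, then `‖Δ‖ ≤ L G/(n-1)`. -/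
theorem stmt0 {d n : ℕ} (hn : 2 ≤ n) (L G : ℝ)
    (H : Fin n → EuclideanSpace ℝ (Fin d) →L[ℝ] EuclideanSpace ℝ (Fin d))
    (g : Fin n → EuclideanSpace ℝ (Fin d))
    (hH : ∀ i, ‖H i‖ ≤ L) (hG : ∀ i, ‖g i‖ ≤ G)
    (hsum : ∑ i, g i = 0)
    (Δ : EuclideanSpace ℝ (Fin d))
    (hΔ : Δ = ((n : ℝ) * ((n : ℝ) - 1))⁻¹ • ∑ i, ∑ j ∈ univ \ {i}, H i (g j)) :
    ‖Δ‖ ≤ L * G / ((n : ℝ) - 1) := by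
  have hn1 : (1 : ℝ) < (n : ℝ) := by exact_mod_cast lt_of_lt_of_le one_lt_two hn
  have hnpos : (0 : ℝ) < n := by linarith
  have hn1pos : (0 : ℝ) < (n : ℝ) - 1 := by linarith
  have i0 : Fin n := ⟨0, by omega⟩
  have hL : 0 ≤ L := le_trans (norm_nonneg _) (hH i0)
  have hG0 : 0 ≤ G := le_trans (norm_nonneg _) (hG i0)
  -- inner sum: ∑_{j≠i} g j = - g i
  have key : ∀ i : Fin n, ∑ j ∈ univ \ {i}, H i (g j) = - H i (g i) := by
    intro i
    have h1 : ∑ j ∈ univ \ {i}, H i (g j) = H i (∑ j ∈ univ \ {i}, g j) := by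
      rw [map_sum]
    have h2 : ∑ j ∈ univ \ {i}, g j = - g i := by
      have := Finset.sum_sdiff_eq_sub (f := g) (Finset.subset_univ {i})
      rw [hsum, Finset.sum_singleton] at this
      rw [this]; abel
    rw [h1, h2, map_neg]
  have hbound : ‖∑ i, ∑ j ∈ univ \ {i}, H i (g j)‖ ≤ n * (L * G) := by
    calc ‖∑ i : Fin n, ∑ j ∈ univ \ {i}, H i (g j)‖
        ≤ ∑ i : Fin n, ‖∑ j ∈ univ \ {i}, H i (g j)‖ := norm_sum_le _ _
      _ ≤ ∑ _i : Fin n, L * G := by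
          apply Finset.sum_le_sum
          intro i _
          rw [key i, norm_neg]
          calc ‖H i (g i)‖ ≤ ‖H i‖ * ‖g i‖ := (H i).le_opNorm _
            _ ≤ L * G := mul_le_mul (hH i) (hG i) (norm_nonneg _) hL
      _ = n * (L * G) := by simp [mul_comm]
  rw [hΔ, norm_smul]
  have : ‖((n : ℝ) * ((n : ℝ) - 1))⁻¹‖ = ((n : ℝ) * ((n : ℝ) - 1))⁻¹ := by
    rw [Real.norm_eq_abs, abs_of_pos]; positivity
  rw [this]
  calc ((n : ℝ) * ((n : ℝ) - 1))⁻¹ * ‖∑ i, ∑ j ∈ univ \ {i}, H i (g j)‖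
      ≤ ((n : ℝ) * ((n : ℝ) - 1))⁻¹ * (n * (L * G)) := by
        apply mul_le_mul_of_nonneg_left hbound; positivity
    _ = L * G / ((n : ℝ) - 1) := by field_simp
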